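/- arXiv:1912.00150 — 4 statements merged into one kernel-verified Lean document; each statement's English description precedes it below -/
import Mathlib

section
/- Almost sure convergence of the plug-in residual entropy: for fixed j ∈ [1, r-1], with a_{R,n}(p) = max_{k∈[j,r]} |p̂_n^{(k)}/P̄_n(x_j) - p_k/P̄(x_j)|, one has limsup_{n→∞} |ℛ_X^{(n)}(x_j) - ℛ_X(x_j)| / a_{R,n}(p) ≤ (1/P̄(x_j)) ∑_{k=j}^{r} |1 + log(p_k/P̄(x_j))| almost surely; in particular ℛ_X^{(n)}(x_j) → ℛ_X(x_j) a.s. -/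
open MeasureTheory ProbabilityTheory Filter Finset Real
open scoped Topology

/-- Empirical relative frequency of the value `v` among the first `n` observations. -/
noncomputable def empFreq {Ω : Type*} (X : ℕ → Ω → ℝ) (v : ℝ) (n : ℕ) (ω : Ω) : ℝ :=
  (∑ i ∈ Finset.range n, if X i ω = v then (1 : ℝ) else 0) / n

/-- Empirical survival function at `t` of the first `n` observations. -/
noncomputable def empSurv {Ω : Type*} (X : ℕ → Ω → ℝ) (t : ℝ) (n : ℕ) (ω : Ω) : ℝ :=
  (∑ i ∈ Finset.range n, if t < X i ω then (1 : ℝ) else 0) / n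

private lemma aux_mvt_event {a : ℝ} (ha : 0 < a) {ε : ℝ} (hε : 0 < ε) {q : ℕ → ℝ}
    (hq : Tendsto q atTop (𝓝 a)) :
    ∀ᶠ n in atTop, |q n * Real.log (q n) - a * Real.log a|
      ≤ (|1 + Real.log a| + ε) * |q n - a| := by
  have hcont : ContinuousAt (fun t : ℝ => |1 + Real.log t|) a :=
    (continuousAt_const.add (Real.continuousAt_log ha.ne')).abs
  obtain ⟨δ, hδ, hball⟩ := Metric.continuousAt_iff.mp hcont ε hε
  set δ' := min δ a with hδ'def
  have hδ'pos : 0 < δ' := lt_min hδ ha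
  have hne : ∀ t ∈ Metric.ball a δ', t ≠ 0 := by
    intro t ht
    have h0 : dist t a < δ' := ht
    rw [Real.dist_eq] at h0
    have h1 : |t - a| < a := lt_of_lt_of_le h0 (min_le_right _ _)
    have h2 := (abs_lt.mp h1).1
    have : (0 : ℝ) < t := by linarith
    exact this.ne'
  have hbound : ∀ t ∈ Metric.ball a δ', ‖Real.log t + 1‖ ≤ |1 + Real.log a| + ε := by
    intro t ht
    have h0 : dist t a < δ' := ht
    have h1 : dist t a < δ := lt_of_lt_of_le h0 (min_le_left _ _)
    have h2 := hball h1
    rw [Real.dist_eq] at h2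
    have h3 := (abs_lt.mp h2).2
    rw [Real.norm_eq_abs, add_comm]
    linarith
  have key : ∀ t ∈ Metric.ball a δ',
      |t * Real.log t - a * Real.log a| ≤ (|1 + Real.log a| + ε) * |t - a| := by
    intro t ht
    have := (convex_ball a δ').norm_image_sub_le_of_norm_hasDerivWithin_le
      (f := fun u : ℝ => u * Real.log u) (f' := fun u : ℝ => Real.log u + 1)
      (fun u hu => (Real.hasDerivAt_mul_log (hne u hu)).hasDerivWithinAt)
      hbound (Metric.mem_ball_self hδ'pos) ht
    simpa [Real.norm_eq_abs] using this
  have hmem : ∀ᶠ n in atTop, q n ∈ Metric.ball a δ' :=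
    hq (Metric.ball_mem_nhds a hδ'pos)
  filter_upwards [hmem] with n hn using key _ hn

private lemma det_limsup {s : Finset ℕ} (hs : s.Nonempty) (q : ℕ → ℕ → ℝ) (a : ℕ → ℝ)
    (ha : ∀ k ∈ s, 0 < a k)
    (hq : ∀ k ∈ s, Tendsto (fun n => q n k) atTop (𝓝 (a k))) :
    Filter.limsup (fun n =>
      |(-∑ k ∈ s, q n k * Real.log (q n k)) - (-∑ k ∈ s, a k * Real.log (a k))|
        / s.sup' hs (fun k => |q n k - a k|)) atTop
      ≤ ∑ k ∈ s, |1 + Real.log (a k)| := by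
  set k₀ := hs.choose with hk₀def
  have hk₀ : k₀ ∈ s := hs.choose_spec
  have hM : ∀ n, (0 : ℝ) ≤ s.sup' hs (fun k => |q n k - a k|) := fun n =>
    le_trans (abs_nonneg _) (Finset.le_sup' (fun k => |q n k - a k|) hk₀)
  have key : ∀ ε : ℝ, 0 < ε → ∀ᶠ n in atTop,
      |(-∑ k ∈ s, q n k * Real.log (q n k)) - (-∑ k ∈ s, a k * Real.log (a k))|
        / s.sup' hs (fun k => |q n k - a k|)
        ≤ ∑ k ∈ s, (|1 + Real.log (a k)| + ε) := by
    intro ε hε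
    have hall : ∀ᶠ n in atTop, ∀ k ∈ s,
        |q n k * Real.log (q n k) - a k * Real.log (a k)|
          ≤ (|1 + Real.log (a k)| + ε) * |q n k - a k| :=
      (Filter.eventually_all_finset _).mpr fun k hk => aux_mvt_event (ha k hk) hε (hq k hk)
    filter_upwards [hall] with n hn
    refine div_le_of_le_mul₀ (hM n)
      (Finset.sum_nonneg fun k _ => add_nonneg (abs_nonneg _) hε.le) ?_
    have e1 : (-∑ k ∈ s, q n k * Real.log (q n k)) - (-∑ k ∈ s, a k * Real.log (a k))
        = ∑ k ∈ s, (a k * Real.log (a k) - q n k * Real.log (q n k)) := by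
      rw [Finset.sum_sub_distrib]; ring
    rw [e1]
    refine le_trans (Finset.abs_sum_le_sum_abs _ _) ?_
    rw [Finset.sum_mul]
    refine Finset.sum_le_sum fun k hk => ?_
    rw [abs_sub_comm]
    refine le_trans (hn k hk) ?_
    exact mul_le_mul_of_nonneg_left (Finset.le_sup' (fun k => |q n k - a k|) hk) (add_nonneg (abs_nonneg _) hε.le)
  have hcard : (0 : ℝ) < s.card := by
    exact_mod_cast Finset.card_pos.mpr ⟨k₀, hk₀⟩
  refine le_of_forall_pos_le_add fun δ hδ => ?_
  have hε : (0 : ℝ) < δ / s.card := div_pos hδ hcard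
  have h1 := key _ hε
  have h2 : Filter.limsup (fun n =>
      |(-∑ k ∈ s, q n k * Real.log (q n k)) - (-∑ k ∈ s, a k * Real.log (a k))|
        / s.sup' hs (fun k => |q n k - a k|)) atTop
      ≤ ∑ k ∈ s, (|1 + Real.log (a k)| + δ / s.card) :=
    Filter.limsup_le_of_le (Filter.isCoboundedUnder_le_of_le atTop
      (fun n => div_nonneg (abs_nonneg _) (hM n))) h1
  refine h2.trans_eq ?_
  rw [Finset.sum_add_distrib, Finset.sum_const, nsmul_eq_mul, mul_div_cancel₀ _ hcard.ne']

private lemma det_tendsto {s : Finset ℕ} (q : ℕ → ℕ → ℝ) (a : ℕ → ℝ)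
    (ha : ∀ k ∈ s, 0 < a k)
    (hq : ∀ k ∈ s, Tendsto (fun n => q n k) atTop (𝓝 (a k))) :
    Tendsto (fun n => -∑ k ∈ s, q n k * Real.log (q n k)) atTop
      (𝓝 (-∑ k ∈ s, a k * Real.log (a k))) := by
  refine Tendsto.neg (tendsto_finset_sum _ fun k hk => ?_)
  exact (hq k hk).mul (((Real.continuousAt_log (ha k hk).ne').tendsto).comp (hq k hk))

private lemma slln_ind {Ω : Type*} [MeasurableSpace Ω] {μ : Measure Ω} [IsProbabilityMeasure μ]
    {X : ℕ → Ω → ℝ} (hmeas : ∀ i, Measurable (X i))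
    (hindep : iIndepFun X μ)
    (hident : ∀ i, Measure.map (X i) μ = Measure.map (X 0) μ)
    (A : Set ℝ) (hA : MeasurableSet A) :
    ∀ᵐ ω ∂μ, Tendsto
      (fun n => (∑ i ∈ Finset.range n, A.indicator (fun _ => (1:ℝ)) (X i ω)) / n)
      atTop (𝓝 ((μ ((X 0) ⁻¹' A)).toReal)) := by
  set φ : ℝ → ℝ := A.indicator (fun _ => 1) with hφ
  have hφm : Measurable φ := measurable_const.indicator hA
  set Y : ℕ → Ω → ℝ := fun i => φ ∘ X i with hY
  have hint : Integrable (Y 0) μ := by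
    have hYeq : Y 0 = Set.indicator ((X 0) ⁻¹' A) (fun _ => (1:ℝ)) := by
      ext ω
      by_cases h : X 0 ω ∈ A <;>
        simp [Y, φ, Set.indicator_apply, Set.mem_preimage, h, Function.comp]
    rw [hYeq]
    exact (integrable_const (1:ℝ)).indicator ((hmeas 0) hA)
  have hind : Pairwise (Function.onFun (IndepFun · · μ) Y) := fun i j hij =>
    (hindep.indepFun hij).comp hφm hφm
  have hid : ∀ i, IdentDistrib (Y i) (Y 0) μ μ := fun i =>
    IdentDistrib.comp ⟨(hmeas i).aemeasurable, (hmeas 0).aemeasurable, hident i⟩ hφm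
  have hslln := strong_law_ae_real Y hint hind hid
  have hEY : (μ[Y 0]) = (μ ((X 0) ⁻¹' A)).toReal := by
    have hYeq : Y 0 = Set.indicator ((X 0) ⁻¹' A) (1 : Ω → ℝ) := by
      ext ω
      by_cases h : X 0 ω ∈ A <;>
        simp [Y, φ, Set.indicator_apply, Set.mem_preimage, h, Function.comp]
    rw [hYeq, MeasureTheory.integral_indicator_one ((hmeas 0) hA), measureReal_def]
  rw [hEY] at hslln
  filter_upwards [hslln] with ω hω
  have hfun : ∀ n : ℕ, (∑ i ∈ Finset.range n, A.indicator (fun _ => (1:ℝ)) (X i ω)) / n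
      = (∑ i ∈ Finset.range n, Y i ω) / n := by
    intro n
    congr 1
  simpa [hfun, Y] using hω

/-- almost sure convergence of the plug-in residual entropy, with the
rate `limsup |ℛ_X^{(n)}(x_j) - ℛ_X(x_j)| / a_{R,n}(p) ≤ (1/P̄(x_j)) ∑_{k=j}^r
|1 + log (p_k / P̄(x_j))|`; in particular `ℛ_X^{(n)}(x_j) → ℛ_X(x_j)` a.s. -/
theorem plugin_residual_entropy_as
    {Ω : Type*} [MeasurableSpace Ω] (μ : Measure Ω) [IsProbabilityMeasure μ]
    (r : ℕ) (x : ℕ → ℝ) (hx : StrictMonoOn x (Set.Icc 1 r)) (p : ℕ → ℝ)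
    (X : ℕ → Ω → ℝ)
    (hmeas : ∀ i, Measurable (X i))
    (hindep : iIndepFun X μ)
    (hident : ∀ i, Measure.map (X i) μ = Measure.map (X 0) μ)
    (hpmf : ∀ k ∈ Finset.Icc 1 r, μ {ω | X 0 ω = x k} = ENNReal.ofReal (p k))
    (hpos : ∀ k ∈ Finset.Icc 1 r, 0 < p k)
    (j : ℕ) (hj1 : 1 ≤ j) (hjr : j ≤ r - 1)
    (Pbar : ℝ) (hPbar : Pbar = ∑ k ∈ Finset.Icc (j + 1) r, p k)
    (hPbarpos : 0 < Pbar)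
    (hsurv : μ {ω | x j < X 0 ω} = ENNReal.ofReal Pbar) :
    (∀ᵐ ω ∂μ,
      Filter.limsup
        (fun n =>
          |(-∑ k ∈ Finset.Icc j r,
              (empFreq X (x k) n ω / empSurv X (x j) n ω)
                * Real.log (empFreq X (x k) n ω / empSurv X (x j) n ω))
            - (-∑ k ∈ Finset.Icc j r, (p k / Pbar) * Real.log (p k / Pbar))|
          / ((Finset.Icc j r).sup' (Finset.nonempty_Icc.mpr (le_trans hjr (Nat.sub_le r 1)))
              (fun k => |empFreq X (x k) n ω / empSurv X (x j) n ω - p k / Pbar|)))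
        atTop
      ≤ (1 / Pbar) * ∑ k ∈ Finset.Icc j r, |1 + Real.log (p k / Pbar)|)
    ∧ (∀ᵐ ω ∂μ,
        Tendsto
          (fun n =>
            -∑ k ∈ Finset.Icc j r,
              (empFreq X (x k) n ω / empSurv X (x j) n ω)
                * Real.log (empFreq X (x k) n ω / empSurv X (x j) n ω))
          atTop
          (nhds (-∑ k ∈ Finset.Icc j r, (p k / Pbar) * Real.log (p k / Pbar)))) := by
  have hjr' : j ≤ r := le_trans hjr (Nat.sub_le r 1)
  have hsub : ∀ k ∈ Finset.Icc j r, k ∈ Finset.Icc 1 r := by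
    intro k hk
    rw [Finset.mem_Icc] at hk ⊢
    exact ⟨le_trans hj1 hk.1, hk.2⟩
  have hPle1 : Pbar ≤ 1 := by
    have h1 : μ {ω | x j < X 0 ω} ≤ 1 := prob_le_one
    rw [hsurv] at h1
    exact ENNReal.ofReal_le_one.mp h1
  -- a.s. convergence of the empirical survival function
  have hsurv_ae : ∀ᵐ ω ∂μ,
      Tendsto (fun n => empSurv X (x j) n ω) atTop (𝓝 Pbar) := by
    have h := slln_ind hmeas hindep hident (Set.Ioi (x j)) measurableSet_Ioi
    have hset : (X 0) ⁻¹' (Set.Ioi (x j)) = {ω | x j < X 0 ω} := by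
      ext ω; simp [Set.mem_preimage, Set.mem_Ioi]
    rw [hset, hsurv, ENNReal.toReal_ofReal hPbarpos.le] at h
    filter_upwards [h] with ω hω
    refine hω.congr fun n => ?_
    simp [empSurv, Set.indicator_apply, Set.mem_Ioi]
  -- a.s. convergence of the empirical frequencies
  have hfreq_ae : ∀ᵐ ω ∂μ, ∀ k ∈ Finset.Icc j r,
      Tendsto (fun n => empFreq X (x k) n ω) atTop (𝓝 (p k)) := by
    refine (Filter.eventually_all_finset _).mpr fun k hk => ?_
    have h := slln_ind hmeas hindep hident {x k} (measurableSet_singleton _)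
    have hset : (X 0) ⁻¹' {x k} = {ω | X 0 ω = x k} := by
      ext ω; simp [Set.mem_preimage]
    rw [hset, hpmf k (hsub k hk),
      ENNReal.toReal_ofReal (hpos k (hsub k hk)).le] at h
    filter_upwards [h] with ω hω
    refine hω.congr fun n => ?_
    simp [empFreq, Set.indicator_apply]
  have hapos : ∀ k ∈ Finset.Icc j r, 0 < p k / Pbar := fun k hk =>
    div_pos (hpos k (hsub k hk)) hPbarpos
  constructor
  · filter_upwards [hsurv_ae, hfreq_ae] with ω hS hF
    have hqa : ∀ k ∈ Finset.Icc j r,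
        Tendsto (fun n => empFreq X (x k) n ω / empSurv X (x j) n ω) atTop
          (𝓝 (p k / Pbar)) := fun k hk => (hF k hk).div hS hPbarpos.ne'
    have h1 := det_limsup (Finset.nonempty_Icc.mpr hjr')
      (fun n k => empFreq X (x k) n ω / empSurv X (x j) n ω)
      (fun k => p k / Pbar) hapos hqa
    refine le_trans h1 ?_
    refine le_mul_of_one_le_left (Finset.sum_nonneg fun k _ => abs_nonneg _) ?_
    rw [le_div_iff₀ hPbarpos, one_mul]
    exact hPle1
  · filter_upwards [hsurv_ae, hfreq_ae] with ω hS hF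
    have hqa : ∀ k ∈ Finset.Icc j r,
        Tendsto (fun n => empFreq X (x k) n ω / empSurv X (x j) n ω) atTop
          (𝓝 (p k / Pbar)) := fun k hk => (hF k hk).div hS hPbarpos.ne'
    exact det_tendsto (s := Finset.Icc j r)
      (fun n k => empFreq X (x k) n ω / empSurv X (x j) n ω)
      (fun k => p k / Pbar) hapos hqa
end

section
/- Almost sure convergence of the empirical cumulative residual entropy: limsup_{n→∞} |𝒞ℛ_X^{(n)} - 𝒞ℛ_X| / a_n(P̄) ≤ ∑_{j=1}^{r-1} |1 + log P̄(x_j)| almost surely, where a_n(P̄) = max_{j∈[1,r-1]} |P̄_n(x_j) - P̄(x_j)|; in particular 𝒞ℛ_X^{(n)} → 𝒞ℛ_X a.s. -/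
open MeasureTheory ProbabilityTheory Filter Finset Real

lemma mvt_mul_log {p : ℝ} (hp : 0 < p) {ε : ℝ} (hε : 0 < ε) :
    ∃ δ > 0, ∀ q : ℝ, |q - p| < δ →
      |q * Real.log q - p * Real.log p| ≤ (|1 + Real.log p| + ε) * |q - p| := by
  have hcont : ContinuousAt (fun t : ℝ => |1 + Real.log t|) p :=
    (continuousAt_const.add (Real.continuousAt_log hp.ne')).abs
  obtain ⟨δ₁, hδ₁, hball⟩ := Metric.continuousAt_iff.1 hcont ε hε
  refine ⟨min δ₁ p, lt_min hδ₁ hp, fun q hq => ?_⟩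
  set s : Set ℝ := Metric.ball p (min δ₁ p)
  have hconv : Convex ℝ s := convex_ball p _
  have hsub : ∀ t ∈ s, (0:ℝ) < t := by
    intro t ht
    have : |t - p| < p := lt_of_lt_of_le ht (min_le_right _ _)
    have := abs_lt.1 this
    linarith [this.1]
  have hbound : ∀ t ∈ s, ‖Real.log t + 1‖ ≤ |1 + Real.log p| + ε := by
    intro t ht
    have h1 : dist t p < δ₁ := lt_of_lt_of_le ht (min_le_left _ _)
    have := hball h1
    rw [Real.dist_eq] at this
    have h2 : |1 + Real.log t| < |1 + Real.log p| + ε := by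
      have := abs_lt.1 this
      linarith [this.2]
    rw [Real.norm_eq_abs, add_comm]
    exact h2.le
  have hderiv : ∀ t ∈ s, HasDerivWithinAt (fun t : ℝ => t * Real.log t)
      (Real.log t + 1) s t := fun t ht =>
    (Real.hasDerivAt_mul_log (hsub t ht).ne').hasDerivWithinAt
  have hq' : q ∈ s := by simpa [s, Metric.mem_ball, Real.dist_eq] using hq
  have hp' : p ∈ s := Metric.mem_ball_self (lt_min hδ₁ hp)
  have := hconv.norm_image_sub_le_of_norm_hasDerivWithin_le hderiv hbound hp' hq'
  simpa [Real.norm_eq_abs] using this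

/-- almost sure convergence of the empirical cumulative residual entropy,
with `limsup |𝒞ℛ_X^{(n)} - 𝒞ℛ_X| / a_n(P̄) ≤ ∑_{j=1}^{r-1} |1 + log P̄(x_j)|` a.s.;
in particular `𝒞ℛ_X^{(n)} → 𝒞ℛ_X` a.s. -/
theorem empirical_cumulative_residual_entropy_as
    {Ω : Type*} [MeasurableSpace Ω] (μ : Measure Ω) [IsProbabilityMeasure μ]
    (r : ℕ) (hr : 1 ≤ r - 1) (x : ℕ → ℝ) (hx : StrictMonoOn x (Set.Icc 1 r))
    (X : ℕ → Ω → ℝ)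
    (hmeas : ∀ i, Measurable (X i))
    (hindep : iIndepFun X μ)
    (hident : ∀ i, Measure.map (X i) μ = Measure.map (X 0) μ)
    (Pbar : ℕ → ℝ)
    (hsurv : ∀ j ∈ Finset.Icc 1 (r - 1), μ {ω | x j < X 0 ω} = ENNReal.ofReal (Pbar j))
    (hpos : ∀ j ∈ Finset.Icc 1 (r - 1), 0 < Pbar j) :
    (∀ᵐ ω ∂μ,
      Filter.limsup
        (fun n =>
          |(-∑ j ∈ Finset.Icc 1 (r - 1),
              empSurv X (x j) n ω * Real.log (empSurv X (x j) n ω))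
            - (-∑ j ∈ Finset.Icc 1 (r - 1), Pbar j * Real.log (Pbar j))|
          / ((Finset.Icc 1 (r - 1)).sup' (Finset.nonempty_Icc.mpr hr)
              (fun j => |empSurv X (x j) n ω - Pbar j|)))
        atTop
      ≤ ∑ j ∈ Finset.Icc 1 (r - 1), |1 + Real.log (Pbar j)|)
    ∧ (∀ᵐ ω ∂μ,
        Tendsto
          (fun n =>
            -∑ j ∈ Finset.Icc 1 (r - 1),
              empSurv X (x j) n ω * Real.log (empSurv X (x j) n ω))
          atTop
          (nhds (-∑ j ∈ Finset.Icc 1 (r - 1), Pbar j * Real.log (Pbar j)))) := by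
  set S := Finset.Icc 1 (r - 1) with hS
  have hne : S.Nonempty := Finset.nonempty_Icc.mpr hr
  -- Step 1: a.s. pointwise convergence of the empirical survival function (SLLN).
  have key : ∀ᵐ ω ∂μ, ∀ j, j ∈ S →
      Tendsto (fun n => empSurv X (x j) n ω) atTop (nhds (Pbar j)) := by
    rw [ae_all_iff]
    intro j
    by_cases hj : j ∈ S
    swap
    · exact Filter.Eventually.of_forall fun ω h => absurd h hj
    set g : ℝ → ℝ := Set.indicator (Set.Ioi (x j)) (fun _ => (1:ℝ)) with hg
    have hgm : Measurable g := (measurable_const (a := (1:ℝ))).indicator measurableSet_Ioi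
    set Y : ℕ → Ω → ℝ := fun i ω => g (X i ω) with hY
    have hYeq : ∀ i ω, Y i ω = if x j < X i ω then (1:ℝ) else 0 := by
      intro i ω
      simp [hY, hg, Set.indicator_apply, Set.mem_Ioi]
    have hsetm : MeasurableSet {ω | x j < X 0 ω} := by
      have : {ω | x j < X 0 ω} = X 0 ⁻¹' Set.Ioi (x j) := rfl
      rw [this]; exact (hmeas 0) measurableSet_Ioi
    have hint : Integrable (Y 0) μ := by
      have : Y 0 = Set.indicator {ω | x j < X 0 ω} (fun _ => (1:ℝ)) := by
        funext ω; simp [hYeq, Set.indicator_apply, Set.mem_setOf_eq]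
      rw [this]
      exact (integrable_const (1:ℝ)).indicator hsetm
    have hYindep : Pairwise (Function.onFun (IndepFun · · μ) Y) := by
      intro i k hik
      exact (hindep.indepFun hik).comp hgm hgm
    have hYident : ∀ i, IdentDistrib (Y i) (Y 0) μ μ := by
      intro i
      have hXid : IdentDistrib (X i) (X 0) μ μ :=
        ⟨(hmeas i).aemeasurable, (hmeas 0).aemeasurable, hident i⟩
      exact hXid.comp hgm
    have hmean : μ[Y 0] = Pbar j := by
      have h1 : Y 0 = Set.indicator {ω | x j < X 0 ω} (fun _ => (1:ℝ)) := by
        funext ω; simp [hYeq, Set.indicator_apply, Set.mem_setOf_eq]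
      rw [h1, integral_indicator_const (1:ℝ) hsetm, Measure.real, hsurv j hj, smul_eq_mul, mul_one,
        ENNReal.toReal_ofReal (hpos j hj).le]
    have := strong_law_ae_real Y hint hYindep hYident
    rw [hmean] at this
    filter_upwards [this] with ω hω _
    have : (fun n : ℕ => (∑ i ∈ range n, Y i ω) / n)
        = fun n => empSurv X (x j) n ω := by
      funext n
      simp only [empSurv, hYeq]
    rwa [this] at hω
  constructor
  · -- limsup bound
    filter_upwards [key] with ω hω
    set q : ℕ → ℕ → ℝ := fun j n => empSurv X (x j) n ω with hq
    set B := ∑ j ∈ S, |1 + Real.log (Pbar j)| with hB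
    have hB0 : 0 ≤ B := Finset.sum_nonneg fun j _ => abs_nonneg _
    refine le_of_forall_pos_le_add fun ε hε => ?_
    have hcard : (0:ℝ) < S.card := by
      exact_mod_cast Finset.card_pos.mpr hne
    set ε' := ε / S.card with hε'
    have hε'pos : 0 < ε' := div_pos hε hcard
    -- choose δ j for each j
    have hδ : ∀ j ∈ S, ∃ δ > 0, ∀ t : ℝ, |t - Pbar j| < δ →
        |t * Real.log t - Pbar j * Real.log (Pbar j)|
          ≤ (|1 + Real.log (Pbar j)| + ε') * |t - Pbar j| :=
      fun j hj => mvt_mul_log (hpos j hj) hε'pos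
    choose! δ hδpos hδbound using hδ
    have hev : ∀ᶠ n in atTop, ∀ j ∈ S, |q j n - Pbar j| < δ j := by
      rw [eventually_all_finset]
      intro j hj
      have := (hω j hj).sub_const (Pbar j)
      have h2 := (this.abs).eventually (eventually_lt_nhds (by simpa using hδpos j hj))
      simpa using h2
    have hev' : ∀ᶠ n in atTop,
        |(-∑ j ∈ S, q j n * Real.log (q j n))
            - (-∑ j ∈ S, Pbar j * Real.log (Pbar j))|
          / (S.sup' hne (fun j => |q j n - Pbar j|)) ≤ B + ε := by
      filter_upwards [hev] with n hn
      set a := S.sup' hne (fun j => |q j n - Pbar j|) with ha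
      have ha0 : 0 ≤ a := Finset.le_sup'_of_le _ (Finset.min'_mem S hne) (abs_nonneg _)
      have hnum : |(-∑ j ∈ S, q j n * Real.log (q j n))
          - (-∑ j ∈ S, Pbar j * Real.log (Pbar j))| ≤ (B + ε) * a := by
        have h1 : (-∑ j ∈ S, q j n * Real.log (q j n))
            - (-∑ j ∈ S, Pbar j * Real.log (Pbar j))
            = ∑ j ∈ S, (Pbar j * Real.log (Pbar j) - q j n * Real.log (q j n)) := by
          rw [Finset.sum_sub_distrib]; ring
        rw [h1]
        calc |∑ j ∈ S, (Pbar j * Real.log (Pbar j) - q j n * Real.log (q j n))|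
            ≤ ∑ j ∈ S, |Pbar j * Real.log (Pbar j) - q j n * Real.log (q j n)| :=
              Finset.abs_sum_le_sum_abs _ _
          _ ≤ ∑ j ∈ S, (|1 + Real.log (Pbar j)| + ε') * a := by
              refine Finset.sum_le_sum fun j hj => ?_
              rw [abs_sub_comm]
              refine le_trans (hδbound j hj _ (hn j hj)) ?_
              exact mul_le_mul_of_nonneg_left
                (Finset.le_sup' (fun j => |q j n - Pbar j|) hj)
                (add_nonneg (abs_nonneg _) hε'pos.le)
          _ = (B + ε) * a := by
              rw [← Finset.sum_mul, Finset.sum_add_distrib, Finset.sum_const, nsmul_eq_mul,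
                hε', mul_div_cancel₀ _ hcard.ne']
      rcases eq_or_lt_of_le ha0 with ha' | ha'
      · have : |(-∑ j ∈ S, q j n * Real.log (q j n))
            - (-∑ j ∈ S, Pbar j * Real.log (Pbar j))| = 0 := by
          refine le_antisymm ?_ (abs_nonneg _)
          calc _ ≤ (B + ε) * a := hnum
            _ = 0 := by rw [← ha']; ring
        rw [this, zero_div]
        positivity
      · rw [div_le_iff₀ ha']
        exact hnum
    exact Filter.limsup_le_of_le
      (Filter.isCoboundedUnder_le_of_le atTop (x := 0) fun n =>
        div_nonneg (abs_nonneg _)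
          (Finset.le_sup'_of_le _ hne.choose_spec (abs_nonneg _))) hev'
  · -- convergence
    filter_upwards [key] with ω hω
    refine Tendsto.neg (tendsto_finset_sum S fun j hj => ?_)
    have hc : ContinuousAt (fun t : ℝ => t * Real.log t) (Pbar j) :=
      (Real.hasDerivAt_mul_log (hpos j hj).ne').continuousAt
    exact hc.tendsto.comp (hω j hj)
end

section
/- Almost sure convergence of the mean residual lifetime estimator: for fixed j ∈ [1,r-1], limsup_{n→∞} |μ_R^{(n)}(x_j) - μ_R(x_j)| / a_n(P̄) ≤ (r-j)/P̄(x_j) + (1/P̄(x_j)²) ∑_{k=j}^{r-1} P̄(x_k) almost surely, where a_n(P̄) = max_j |P̄_n(x_j) - P̄(x_j)|; in particular μ_R^{(n)}(x_j) → μ_R(x_j) a.s. -/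
open MeasureTheory ProbabilityTheory Filter Finset Real

theorem empSurv_tendsto_ae {Ω : Type*} [MeasurableSpace Ω] (μ : Measure Ω) [IsProbabilityMeasure μ]
    (X : ℕ → Ω → ℝ) (hmeas : ∀ i, Measurable (X i))
    (hindep : iIndepFun X μ)
    (hident : ∀ i, Measure.map (X i) μ = Measure.map (X 0) μ) (t : ℝ) (p : ℝ) (hp : 0 ≤ p)
    (hs : μ {ω | t < X 0 ω} = ENNReal.ofReal p) :
    ∀ᵐ ω ∂μ, Tendsto (fun n => empSurv X t n ω) atTop (nhds p) := by
  set f : ℝ → ℝ := (Set.Ioi t).indicator (fun _ => 1) with hf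
  have hfm : Measurable f := measurable_const.indicator measurableSet_Ioi
  set Y : ℕ → Ω → ℝ := fun i => f ∘ X i with hY
  have hYeq : ∀ i ω, Y i ω = if t < X i ω then (1:ℝ) else 0 := by
    intro i ω
    simp [hY, hf, Set.indicator, Set.mem_Ioi]
  have hint : Integrable (Y 0) μ := by
    have : Y 0 = (X 0 ⁻¹' Set.Ioi t).indicator (fun _ => (1:ℝ)) := by
      ext ω; simp [hY, hf, Set.indicator]
    rw [this]
    exact (integrable_const (1:ℝ)).indicator ((hmeas 0) measurableSet_Ioi)
  have hEY : μ[Y 0] = p := by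
    have : Y 0 = (X 0 ⁻¹' Set.Ioi t).indicator (fun _ => (1:ℝ)) := by
      ext ω; simp [hY, hf, Set.indicator]
    rw [this, integral_indicator_const _ ((hmeas 0) measurableSet_Ioi)]
    have : X 0 ⁻¹' Set.Ioi t = {ω | t < X 0 ω} := rfl
    rw [this, measureReal_def, hs, ENNReal.toReal_ofReal hp]
    simp
  have hpind : Pairwise (Function.onFun (IndepFun · · μ) Y) := by
    intro i k hik
    exact (hindep.indepFun hik).comp hfm hfm
  have hpid : ∀ i, IdentDistrib (Y i) (Y 0) μ μ := by
    intro i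
    have : IdentDistrib (X i) (X 0) μ μ :=
      ⟨(hmeas i).aemeasurable, (hmeas 0).aemeasurable, hident i⟩
    exact this.comp hfm
  have := strong_law_ae_real Y hint hpind hpid
  rw [hEY] at this
  filter_upwards [this] with ω hω
  have : (fun n => empSurv X t n ω) = fun n : ℕ => (∑ i ∈ range n, Y i ω) / n := by
    funext n; simp only [empSurv, hYeq]
  rw [this]; exact hω

/-- almost sure convergence of the mean residual lifetime estimator, with
`limsup |μ_R^{(n)}(x_j) - μ_R(x_j)| / a_n(P̄) ≤ (r-j)/P̄(x_j) + (1/P̄(x_j)²) ∑_{k=j}^{r-1} P̄(x_k)`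
a.s.; in particular `μ_R^{(n)}(x_j) → μ_R(x_j)` a.s. -/
theorem mean_residual_lifetime_estimator_as
    {Ω : Type*} [MeasurableSpace Ω] (μ : Measure Ω) [IsProbabilityMeasure μ]
    (r : ℕ) (hr : 1 ≤ r - 1) (x : ℕ → ℝ) (hx : StrictMonoOn x (Set.Icc 1 r))
    (X : ℕ → Ω → ℝ)
    (hmeas : ∀ i, Measurable (X i))
    (hindep : iIndepFun X μ)
    (hident : ∀ i, Measure.map (X i) μ = Measure.map (X 0) μ)
    (Pbar : ℕ → ℝ)
    (hsurv : ∀ k ∈ Finset.Icc 1 (r - 1), μ {ω | x k < X 0 ω} = ENNReal.ofReal (Pbar k))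
    (hpos : ∀ k ∈ Finset.Icc 1 (r - 1), 0 < Pbar k)
    (j : ℕ) (hj1 : 1 ≤ j) (hjr : j ≤ r - 1) :
    (∀ᵐ ω ∂μ,
      Filter.limsup
        (fun n =>
          |(1 / empSurv X (x j) n ω) * ∑ k ∈ Finset.Icc j (r - 1), empSurv X (x k) n ω
            - (1 / Pbar j) * ∑ k ∈ Finset.Icc j (r - 1), Pbar k|
          / ((Finset.Icc 1 (r - 1)).sup' (Finset.nonempty_Icc.mpr hr)
              (fun k => |empSurv X (x k) n ω - Pbar k|)))
        atTop
      ≤ ((r : ℝ) - (j : ℝ)) / Pbar j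
        + (1 / (Pbar j) ^ 2) * ∑ k ∈ Finset.Icc j (r - 1), Pbar k)
    ∧ (∀ᵐ ω ∂μ,
        Tendsto
          (fun n =>
            (1 / empSurv X (x j) n ω) * ∑ k ∈ Finset.Icc j (r - 1), empSurv X (x k) n ω)
          atTop
          (nhds ((1 / Pbar j) * ∑ k ∈ Finset.Icc j (r - 1), Pbar k))) := by
  have hj : j ∈ Finset.Icc 1 (r - 1) := Finset.mem_Icc.mpr ⟨hj1, hjr⟩
  have hsub : ∀ k ∈ Finset.Icc j (r - 1), k ∈ Finset.Icc 1 (r - 1) := by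
    intro k hk
    rw [Finset.mem_Icc] at hk ⊢
    exact ⟨hj1.trans hk.1, hk.2⟩
  have hPj : 0 < Pbar j := hpos j hj
  have hjr' : j ≤ r := hjr.trans (Nat.sub_le r 1)
  have hrj : (0:ℝ) ≤ (r:ℝ) - (j:ℝ) := by
    have : (j:ℝ) ≤ (r:ℝ) := by exact_mod_cast hjr'
    linarith
  set T : ℝ := ∑ k ∈ Finset.Icc j (r - 1), Pbar k with hT
  have hT0 : 0 ≤ T := Finset.sum_nonneg fun k hk => (hpos k (hsub k hk)).le
  -- a.s. convergence of all empirical survival values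
  have hae : ∀ᵐ ω ∂μ, ∀ k, k ∈ Finset.Icc 1 (r - 1) →
      Tendsto (fun n => empSurv X (x k) n ω) atTop (nhds (Pbar k)) := by
    rw [ae_all_iff]
    intro k
    by_cases hk : k ∈ Finset.Icc 1 (r - 1)
    · filter_upwards [empSurv_tendsto_ae μ X hmeas hindep hident (x k) (Pbar k)
        (hpos k hk).le (hsurv k hk)] with ω h _
      exact h
    · exact Eventually.of_forall fun ω h => absurd h hk
  constructor
  · -- limsup bound
    filter_upwards [hae] with ω hω
    have hSj : Tendsto (fun n => empSurv X (x j) n ω) atTop (nhds (Pbar j)) := hω j hj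
    set hfun : ℕ → ℝ := fun n => ((r:ℝ) - (j:ℝ)) / empSurv X (x j) n ω
      + T / (empSurv X (x j) n ω * Pbar j) with hhfun
    have htend : Tendsto hfun atTop
        (nhds (((r:ℝ) - (j:ℝ)) / Pbar j + T / (Pbar j * Pbar j))) :=
      (tendsto_const_nhds.div hSj hPj.ne').add
        (tendsto_const_nhds.div (hSj.mul tendsto_const_nhds) (mul_ne_zero hPj.ne' hPj.ne'))
    have ha0 : ∀ n : ℕ, 0 ≤ (Finset.Icc 1 (r - 1)).sup' (Finset.nonempty_Icc.mpr hr)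
        (fun k => |empSurv X (x k) n ω - Pbar k|) := fun n =>
      (abs_nonneg _).trans (Finset.le_sup' (fun k => |empSurv X (x k) n ω - Pbar k|) hj)
    have hbound : ∀ᶠ n in atTop,
        |(1 / empSurv X (x j) n ω) * ∑ k ∈ Finset.Icc j (r - 1), empSurv X (x k) n ω
            - (1 / Pbar j) * ∑ k ∈ Finset.Icc j (r - 1), Pbar k|
          / ((Finset.Icc 1 (r - 1)).sup' (Finset.nonempty_Icc.mpr hr)
              (fun k => |empSurv X (x k) n ω - Pbar k|)) ≤ hfun n := by
      filter_upwards [hSj.eventually (eventually_gt_nhds hPj)] with n hSn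
      set a : ℝ := (Finset.Icc 1 (r - 1)).sup' (Finset.nonempty_Icc.mpr hr)
        (fun k => |empSurv X (x k) n ω - Pbar k|) with ha
      set S : ℝ := empSurv X (x j) n ω with hSdef
      set E : ℝ := ∑ k ∈ Finset.Icc j (r - 1), empSurv X (x k) n ω with hE
      have hak : ∀ k ∈ Finset.Icc j (r - 1), |empSurv X (x k) n ω - Pbar k| ≤ a :=
        fun k hk => Finset.le_sup' (fun k => |empSurv X (x k) n ω - Pbar k|) (hsub k hk)
      have haj : |S - Pbar j| ≤ a := Finset.le_sup' (fun k => |empSurv X (x k) n ω - Pbar k|) hj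
      have hhn : 0 ≤ hfun n := by
        rw [hhfun]
        positivity
      have ha0' : (0:ℝ) ≤ a := ha0 n
      rcases ha0'.eq_or_lt with hzero | hapos
      · -- a = 0 : numerator vanishes
        have hSeq : S = Pbar j := by
          have := haj
          rw [← hzero] at this
          have := abs_nonpos_iff.mp this
          linarith
        have hEeq : E = T := by
          rw [hE, hT]
          refine Finset.sum_congr rfl fun k hk => ?_
          have := hak k hk
          rw [← hzero] at this
          have := abs_nonpos_iff.mp this
          linarith
        rw [hSeq, hEeq, sub_self, abs_zero, zero_div]
        exact hhn
      · rw [div_le_iff₀ hapos]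
        have key : (1 / S) * E - (1 / Pbar j) * T
            = (1 / S) * (E - T) + T * (Pbar j - S) / (S * Pbar j) := by
          field_simp
          ring
        have h1 : |E - T| ≤ ((r:ℝ) - (j:ℝ)) * a := by
          rw [hE, hT, ← Finset.sum_sub_distrib]
          calc |∑ k ∈ Finset.Icc j (r - 1), (empSurv X (x k) n ω - Pbar k)|
              ≤ ∑ k ∈ Finset.Icc j (r - 1), |empSurv X (x k) n ω - Pbar k| :=
                Finset.abs_sum_le_sum_abs _ _
            _ ≤ ∑ _k ∈ Finset.Icc j (r - 1), a := Finset.sum_le_sum hak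
            _ = ((Finset.Icc j (r - 1)).card : ℝ) * a := by
                rw [Finset.sum_const, nsmul_eq_mul]
            _ = ((r:ℝ) - (j:ℝ)) * a := by
                rw [Nat.card_Icc]
                have hcard : r - 1 + 1 - j = r - j := by omega
                rw [hcard, Nat.cast_sub hjr']
        have h2 : |Pbar j - S| ≤ a := by rw [abs_sub_comm]; exact haj
        calc |(1 / S) * E - (1 / Pbar j) * T|
            = |(1 / S) * (E - T) + T * (Pbar j - S) / (S * Pbar j)| := by rw [key]
          _ ≤ |(1 / S) * (E - T)| + |T * (Pbar j - S) / (S * Pbar j)| := abs_add_le _ _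
          _ = (1 / S) * |E - T| + T * |Pbar j - S| / (S * Pbar j) := by
              rw [abs_mul, abs_of_pos (show (0:ℝ) < 1 / S by positivity), abs_div,
                abs_mul, abs_of_nonneg hT0,
                abs_of_pos (show (0:ℝ) < S * Pbar j by positivity)]
          _ ≤ (1 / S) * (((r:ℝ) - (j:ℝ)) * a) + T * a / (S * Pbar j) := by
              gcongr
          _ = hfun n * a := by rw [hhfun]; ring
    have hfin : Filter.limsup hfun atTop
        = ((r:ℝ) - (j:ℝ)) / Pbar j + (1 / (Pbar j) ^ 2) * T := by
      rw [htend.limsup_eq]; ring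
    refine le_trans (Filter.limsup_le_limsup hbound ?_ ?_) hfin.le
    · apply isCoboundedUnder_le_of_le (α := ℝ) atTop (x := 0)
      intro n
      exact div_nonneg (abs_nonneg _) (ha0 n)
    · exact htend.isBoundedUnder_le
  · -- a.s. convergence
    filter_upwards [hae] with ω hω
    have hSj : Tendsto (fun n => empSurv X (x j) n ω) atTop (nhds (Pbar j)) := hω j hj
    have hsum : Tendsto (fun n => ∑ k ∈ Finset.Icc j (r - 1), empSurv X (x k) n ω)
        atTop (nhds T) :=
      tendsto_finset_sum _ fun k hk => hω k (hsub k hk)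
    exact (tendsto_const_nhds.div hSj hPj.ne').mul hsum
end

section
/- Almost sure convergence of the mean inactivity lifetime estimator: for fixed j ∈ [1,r-1], limsup_{n→∞} |μ_P^{(n)}(x_j) - μ_P(x_j)| / a_n(P) ≤ j/P(x_j) + (1/P(x_j)²) ∑_{k=1}^{j} P(x_k) almost surely, where a_n(P) = max_j |P_n(x_j) - P(x_j)|. -/
open MeasureTheory ProbabilityTheory Filter Finset Real

/-- Empirical cumulative distribution function at `t` of the first `n` observations. -/
noncomputable def empCDF {Ω : Type*} (X : ℕ → Ω → ℝ) (t : ℝ) (n : ℕ) (ω : Ω) : ℝ :=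
  (∑ i ∈ Finset.range n, if X i ω ≤ t then (1 : ℝ) else 0) / n

/-- Almost sure convergence of the empirical CDF at a fixed point, via the strong law. -/
theorem empCDF_tendsto_ae
    {Ω : Type*} [MeasurableSpace Ω] (μ : Measure Ω) [IsProbabilityMeasure μ]
    (X : ℕ → Ω → ℝ)
    (hmeas : ∀ i, Measurable (X i))
    (hindep : iIndepFun X μ)
    (hident : ∀ i, Measure.map (X i) μ = Measure.map (X 0) μ)
    (t : ℝ) :
    ∀ᵐ ω ∂μ, Filter.Tendsto (fun n => empCDF X t n ω) atTop
      (nhds ((μ {ω | X 0 ω ≤ t}).toReal)) := by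
  set f : ℝ → ℝ := (Set.Iic t).indicator 1 with hfdef
  have mf : Measurable f := measurable_const.indicator measurableSet_Iic
  set Y : ℕ → Ω → ℝ := fun i => f ∘ X i with hYdef
  have hY0 : Y 0 = Set.indicator {ω | X 0 ω ≤ t} (fun _ => (1 : ℝ)) := by
    funext ω
    simp [hYdef, hfdef, Set.indicator_apply, Set.mem_Iic, Set.mem_setOf_eq]
  have hsmeas : MeasurableSet {ω | X 0 ω ≤ t} := hmeas 0 measurableSet_Iic
  have hint : Integrable (Y 0) μ := by
    rw [hY0]
    exact (integrable_const (1 : ℝ)).indicator hsmeas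
  have hYindep : Pairwise (Function.onFun (IndepFun · · μ) Y) := fun i k hik =>
    (hindep.indepFun hik).comp mf mf
  have hYident : ∀ i, IdentDistrib (Y i) (Y 0) μ μ := fun i =>
    IdentDistrib.comp ⟨(hmeas i).aemeasurable, (hmeas 0).aemeasurable, hident i⟩ mf
  have hE : (μ[Y 0]) = (μ {ω | X 0 ω ≤ t}).toReal := by
    rw [hY0]
    exact integral_indicator_one hsmeas
  filter_upwards [strong_law_ae_real Y hint hYindep hYident] with ω hω
  rw [hE] at hω
  have heq : (fun n => empCDF X t n ω) = fun n : ℕ => (∑ i ∈ Finset.range n, Y i ω) / n := by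
    funext n
    unfold empCDF
    congr 1
  exact heq ▸ hω

/-- almost sure convergence of the mean inactivity lifetime estimator:
`limsup |μ_P^{(n)}(x_j) - μ_P(x_j)| / a_n(P) ≤ j/P(x_j) + (1/P(x_j)²) ∑_{k=1}^j P(x_k)` a.s. -/
theorem mean_inactivity_lifetime_estimator_as
    {Ω : Type*} [MeasurableSpace Ω] (μ : Measure Ω) [IsProbabilityMeasure μ]
    (r : ℕ) (hr : 1 ≤ r) (x : ℕ → ℝ) (hx : StrictMonoOn x (Set.Icc 1 r))
    (X : ℕ → Ω → ℝ)
    (hmeas : ∀ i, Measurable (X i))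
    (hindep : iIndepFun X μ)
    (hident : ∀ i, Measure.map (X i) μ = Measure.map (X 0) μ)
    (P : ℕ → ℝ)
    (hcdf : ∀ k ∈ Finset.Icc 1 r, μ {ω | X 0 ω ≤ x k} = ENNReal.ofReal (P k))
    (hpos : ∀ k ∈ Finset.Icc 1 r, 0 < P k)
    (j : ℕ) (hj1 : 1 ≤ j) (hjr : j ≤ r - 1) :
    ∀ᵐ ω ∂μ,
      Filter.limsup
        (fun n =>
          |(1 / empCDF X (x j) n ω) * ∑ k ∈ Finset.Icc 1 j, empCDF X (x k) n ω
            - (1 / P j) * ∑ k ∈ Finset.Icc 1 j, P k|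
          / ((Finset.Icc 1 r).sup' (Finset.nonempty_Icc.mpr hr)
              (fun k => |empCDF X (x k) n ω - P k|)))
        atTop
      ≤ (j : ℝ) / P j + (1 / (P j) ^ 2) * ∑ k ∈ Finset.Icc 1 j, P k := by
  -- convergence of the empirical CDF at each point x k
  have key : ∀ k ∈ Finset.Icc 1 r, ∀ᵐ ω ∂μ,
      Filter.Tendsto (fun n => empCDF X (x k) n ω) atTop (nhds (P k)) := by
    intro k hk
    have h1 := empCDF_tendsto_ae μ X hmeas hindep hident (x k)
    have h2 : (μ {ω | X 0 ω ≤ x k}).toReal = P k := by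
      rw [hcdf k hk, ENNReal.toReal_ofReal (hpos k hk).le]
    rwa [h2] at h1
  have key' : ∀ᵐ ω ∂μ, ∀ k ∈ Finset.Icc 1 r,
      Filter.Tendsto (fun n => empCDF X (x k) n ω) atTop (nhds (P k)) := by
    rw [ae_all_iff (p := fun ω k => k ∈ Finset.Icc 1 r →
      Filter.Tendsto (fun n => empCDF X (x k) n ω) atTop (nhds (P k)))]
    intro k
    by_cases hk : k ∈ Finset.Icc 1 r
    · filter_upwards [key k hk] with ω h _; exact h
    · filter_upwards with ω h; exact absurd h hk
  filter_upwards [key'] with ω hω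
  have hjmem : j ∈ Finset.Icc 1 r := by
    simp only [Finset.mem_Icc]; omega
  have hsub : Finset.Icc 1 j ⊆ Finset.Icc 1 r :=
    Finset.Icc_subset_Icc_right (by omega)
  have hjj : j ∈ Finset.Icc 1 j := Finset.mem_Icc.mpr ⟨hj1, le_refl j⟩
  have hPj : 0 < P j := hpos j hjmem
  set S : ℝ := ∑ k ∈ Finset.Icc 1 j, P k with hS
  have hS0 : 0 ≤ S := Finset.sum_nonneg fun k hk => (hpos k (hsub hk)).le
  set g : ℕ → ℝ := fun n => (j : ℝ) / empCDF X (x j) n ω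
      + S / (empCDF X (x j) n ω * P j) with hg
  have hFj : Filter.Tendsto (fun n => empCDF X (x j) n ω) atTop (nhds (P j)) :=
    hω j hjmem
  have hgt : Filter.Tendsto g atTop
      (nhds ((j : ℝ) / P j + S / (P j * P j))) := by
    apply Filter.Tendsto.add
    · exact tendsto_const_nhds.div hFj hPj.ne'
    · exact tendsto_const_nhds.div (hFj.mul tendsto_const_nhds)
        (by positivity)
  -- eventually `empCDF X (x j) n ω` is positive
  have hev : ∀ᶠ n in atTop, 0 < empCDF X (x j) n ω :=
    hFj.eventually (eventually_gt_nhds hPj)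
  -- eventually the ratio is bounded by g
  have hratio : (fun n =>
      |(1 / empCDF X (x j) n ω) * ∑ k ∈ Finset.Icc 1 j, empCDF X (x k) n ω
        - (1 / P j) * ∑ k ∈ Finset.Icc 1 j, P k|
      / ((Finset.Icc 1 r).sup' (Finset.nonempty_Icc.mpr hr)
          (fun k => |empCDF X (x k) n ω - P k|))) ≤ᶠ[atTop] g := by
    filter_upwards [hev] with n hFn
    have hFn' : (0:ℝ) < 1 / empCDF X (x j) n ω := one_div_pos.mpr hFn
    set a : ℝ := (Finset.Icc 1 r).sup' (Finset.nonempty_Icc.mpr hr)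
        (fun k => |empCDF X (x k) n ω - P k|) with ha
    have hk_le : ∀ k ∈ Finset.Icc 1 j, |empCDF X (x k) n ω - P k| ≤ a := by
      intro k hk
      rw [ha]
      exact Finset.le_sup' (fun k => |empCDF X (x k) n ω - P k|) (hsub hk)
    have ha0 : 0 ≤ a := (abs_nonneg _).trans (hk_le j hjj)
    have hgn : 0 ≤ g n := by
      rw [hg]
      exact add_nonneg (div_nonneg (Nat.cast_nonneg j) hFn.le)
        (div_nonneg hS0 (mul_nonneg hFn.le hPj.le))
    rcases eq_or_lt_of_le ha0 with h0 | hapos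
    · -- a = 0 : all deviations vanish, numerator is zero
      have hzero : ∀ k ∈ Finset.Icc 1 j, empCDF X (x k) n ω = P k := by
        intro k hk
        have h1 := hk_le k hk
        rw [← h0] at h1
        have h2 : |empCDF X (x k) n ω - P k| = 0 := le_antisymm h1 (abs_nonneg _)
        have := abs_eq_zero.mp h2
        linarith
      have hnum : (1 / empCDF X (x j) n ω) * ∑ k ∈ Finset.Icc 1 j, empCDF X (x k) n ω
          - (1 / P j) * ∑ k ∈ Finset.Icc 1 j, P k = 0 := by
        rw [hzero j hjj, Finset.sum_congr rfl hzero]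
        simp
      rw [hnum]
      simpa using hgn
    · -- a > 0 : standard decomposition bound
      rw [div_le_iff₀ hapos]
      have hdecomp : (1 / empCDF X (x j) n ω) * ∑ k ∈ Finset.Icc 1 j, empCDF X (x k) n ω
          - (1 / P j) * ∑ k ∈ Finset.Icc 1 j, P k
          = (1 / empCDF X (x j) n ω) * (∑ k ∈ Finset.Icc 1 j, (empCDF X (x k) n ω - P k))
            + (1 / empCDF X (x j) n ω - 1 / P j) * S := by
        rw [Finset.sum_sub_distrib, hS]
        ring
      rw [hdecomp]
      have h1 : |(1 / empCDF X (x j) n ω) * (∑ k ∈ Finset.Icc 1 j, (empCDF X (x k) n ω - P k))|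
          ≤ (1 / empCDF X (x j) n ω) * ((j : ℝ) * a) := by
        rw [abs_mul, abs_of_pos hFn']
        apply mul_le_mul_of_nonneg_left _ hFn'.le
        calc |∑ k ∈ Finset.Icc 1 j, (empCDF X (x k) n ω - P k)|
            ≤ ∑ k ∈ Finset.Icc 1 j, |empCDF X (x k) n ω - P k| :=
              Finset.abs_sum_le_sum_abs _ _
          _ ≤ ∑ _k ∈ Finset.Icc 1 j, a := Finset.sum_le_sum hk_le
          _ = (j : ℝ) * a := by
              rw [Finset.sum_const, Nat.card_Icc]
              simp [nsmul_eq_mul]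
      have h2 : |(1 / empCDF X (x j) n ω - 1 / P j) * S|
          ≤ a / (empCDF X (x j) n ω * P j) * S := by
        rw [abs_mul, abs_of_nonneg hS0]
        apply mul_le_mul_of_nonneg_right _ hS0
        have heq : 1 / empCDF X (x j) n ω - 1 / P j
            = (P j - empCDF X (x j) n ω) / (empCDF X (x j) n ω * P j) := by
          field_simp
        rw [heq, abs_div, abs_of_pos (mul_pos hFn hPj)]
        apply div_le_div_of_nonneg_right _ (mul_pos hFn hPj).le
        · rw [abs_sub_comm]
          exact hk_le j hjj
      calc |(1 / empCDF X (x j) n ω) * (∑ k ∈ Finset.Icc 1 j, (empCDF X (x k) n ω - P k))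
            + (1 / empCDF X (x j) n ω - 1 / P j) * S|
          ≤ |(1 / empCDF X (x j) n ω) * (∑ k ∈ Finset.Icc 1 j, (empCDF X (x k) n ω - P k))|
            + |(1 / empCDF X (x j) n ω - 1 / P j) * S| := abs_add_le _ _
        _ ≤ (1 / empCDF X (x j) n ω) * ((j : ℝ) * a)
            + a / (empCDF X (x j) n ω * P j) * S := add_le_add h1 h2
        _ = g n * a := by rw [hg]; ring
  -- conclude via limsup comparison
  have hco : Filter.IsCoboundedUnder (· ≤ ·) atTop (fun n =>
      |(1 / empCDF X (x j) n ω) * ∑ k ∈ Finset.Icc 1 j, empCDF X (x k) n ω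
        - (1 / P j) * ∑ k ∈ Finset.Icc 1 j, P k|
      / ((Finset.Icc 1 r).sup' (Finset.nonempty_Icc.mpr hr)
          (fun k => |empCDF X (x k) n ω - P k|))) := by
    apply Filter.isCoboundedUnder_le_of_le atTop (x := 0)
    intro n
    apply div_nonneg (abs_nonneg _)
    exact (abs_nonneg _).trans
      (Finset.le_sup' (fun k => |empCDF X (x k) n ω - P k|) hjmem)
  have hbd : Filter.IsBoundedUnder (· ≤ ·) atTop g := hgt.isBoundedUnder_le
  have hlim : Filter.limsup g atTop = (j : ℝ) / P j + S / (P j * P j) :=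
    hgt.limsup_eq
  have hfinal : (j : ℝ) / P j + S / (P j * P j)
      = (j : ℝ) / P j + (1 / (P j) ^ 2) * ∑ k ∈ Finset.Icc 1 j, P k := by
    rw [hS]; field_simp
  calc Filter.limsup _ atTop ≤ Filter.limsup g atTop :=
        Filter.limsup_le_limsup hratio hco hbd
    _ = _ := by rw [hlim, hfinal]
end
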